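/- Exactness of the reduced model under equal time constants: consider the full (|G|+1)-dimensional system ẋ = Ax + Bu with x = (Δω, P^m) where A has first row (−D_eff/M_eff, 1ᵀ/M_eff) and remaining rows given by Ṗ^m = −T⁻¹ P^m − T⁻¹ R_G Δω + T⁻¹ P^r with T = diag(τ₁,…,τ_{|G|}). If τ_g = τ̄ for all g, then the pair (Δω(t), Σ_g P^m_g(t)) satisfies the reduced two-dimensional dynamics: d/dt Δω = (−D_eff Δω + Σ_g P^m_g + P_load)/M_eff and d/dt (Σ_g P^m_g) = (−Σ_g P^m_g − (Σ_g R_{G,g}) Δω + Σ_g P^r_g)/τ̄. Consequently, if Δω_red(0) = Δω(0) and P^m_red(0) = Σ_g P^m_g(0), then Δω_red(t) = Δω(t) for all t ≥ 0. -/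

import Mathlib

open scoped BigOperators

/-- Exactness of the reduced model under equal turbine time constants. The full system
is `M_eff Δω̇ = -D_eff Δω + Σ_g P^m_g + P_load` and
`τ_g Ṗ^m_g = -P^m_g - R_g Δω + P^r_g` with `τ_g = τ̄` for all `g`. Then the aggregate
pair `(Δω, Σ_g P^m_g)` satisfies the reduced two-dimensional dynamics, and every
solution `(Δω_red, P^m_red)` of the reduced model with matching initial conditions
`Δω_red(0) = Δω(0)`, `P^m_red(0) = Σ_g P^m_g(0)` satisfies `Δω_red(t) = Δω(t)` for all
`t ≥ 0`. -/
theorem stmt_8 {G : ℕ} (Meff Deff τbar Pload : ℝ)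
    (hM : 0 < Meff) (hD : 0 ≤ Deff) (hτ : 0 < τbar)
    (R Pr : Fin G → ℝ)
    (Δω : ℝ → ℝ) (Pm : ℝ → Fin G → ℝ)
    (hΔω : ∀ t, HasDerivAt Δω
      ((-Deff * Δω t + (∑ g, Pm t g) + Pload) / Meff) t)
    (hPm : ∀ g, ∀ t, HasDerivAt (fun s => Pm s g)
      ((-(Pm t g) - R g * Δω t + Pr g) / τbar) t)
    (ωred Pred : ℝ → ℝ)
    (hωred : ∀ t, HasDerivAt ωred
      ((-Deff * ωred t + Pred t + Pload) / Meff) t)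
    (hPred : ∀ t, HasDerivAt Pred
      ((-(Pred t) - (∑ g, R g) * ωred t + (∑ g, Pr g)) / τbar) t)
    (h0ω : ωred 0 = Δω 0) (h0P : Pred 0 = ∑ g, Pm 0 g) :
    (∀ t, HasDerivAt (fun s => ∑ g, Pm s g)
        ((-(∑ g, Pm t g) - (∑ g, R g) * Δω t + (∑ g, Pr g)) / τbar) t)
      ∧ ∀ t : ℝ, 0 ≤ t → ωred t = Δω t := by
  set S : ℝ := ∑ g, R g with hS
  set Q : ℝ := ∑ g, Pr g with hQ
  have hsum : ∀ t, HasDerivAt (fun s => ∑ g, Pm s g)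
      ((-(∑ g, Pm t g) - S * Δω t + Q) / τbar) t := by
    intro t
    have h := HasDerivAt.fun_sum (fun g (_ : g ∈ Finset.univ) => hPm g t)
    refine h.congr_deriv ?_
    rw [← Finset.sum_div]
    congr 1
    rw [Finset.sum_add_distrib, Finset.sum_sub_distrib, ← Finset.sum_neg_distrib,
      ← Finset.sum_mul]
  refine ⟨hsum, ?_⟩
  -- uniqueness via Grönwall
  set c : ℝ × ℝ := (Pload / Meff, Q / τbar) with hc
  set L : ℝ × ℝ →L[ℝ] ℝ × ℝ :=
    (((-Deff / Meff) • (ContinuousLinearMap.fst ℝ ℝ ℝ) +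
      (Meff⁻¹) • (ContinuousLinearMap.snd ℝ ℝ ℝ)).prod
     ((-S / τbar) • (ContinuousLinearMap.fst ℝ ℝ ℝ) +
      (-τbar⁻¹) • (ContinuousLinearMap.snd ℝ ℝ ℝ))) with hL
  set v : ℝ → ℝ × ℝ → ℝ × ℝ := fun _ x => L x + c with hv
  have hveq : ∀ x : ℝ × ℝ, v 0 x =
      ((-Deff * x.1 + x.2 + Pload) / Meff, (-(x.2) - S * x.1 + Q) / τbar) := by
    intro x
    simp only [hv, hL, hc, ContinuousLinearMap.prod_apply, ContinuousLinearMap.add_apply,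
      ContinuousLinearMap.coe_smul', Pi.smul_apply, ContinuousLinearMap.coe_fst',
      ContinuousLinearMap.coe_snd', smul_eq_mul, Prod.mk_add_mk]
    refine Prod.ext ?_ ?_ <;> · show _ = _; field_simp <;> ring_nf
  have hlip : ∀ t : ℝ, LipschitzWith ‖L‖₊ (v t) := by
    intro t
    apply LipschitzWith.of_dist_le_mul
    intro x y
    have : dist (v t x) (v t y) = dist (L x) (L y) := by
      simp [hv, dist_eq_norm]
    rw [this]
    exact L.lipschitz.dist_le_mul x y
  intro t ht
  set f : ℝ → ℝ × ℝ := fun s => (ωred s, Pred s) with hf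
  set g : ℝ → ℝ × ℝ := fun s => (Δω s, ∑ g, Pm s g) with hg
  have hf' : ∀ s, HasDerivAt f (v s (f s)) s := by
    intro s
    have := (hωred s).prodMk (hPred s)
    rw [hveq (f s)]
    exact this
  have hg' : ∀ s, HasDerivAt g (v s (g s)) s := by
    intro s
    have := (hΔω s).prodMk (hsum s)
    rw [hveq (g s)]
    exact this
  have h0 : f 0 = g 0 := by simp [hf, hg, h0ω, h0P]
  have key : Set.EqOn f g (Set.Icc 0 t) := by
    apply ODE_solution_unique hlip
    · exact fun s _ => (hf' s).continuousAt.continuousWithinAt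
    · exact fun s _ => (hf' s).hasDerivWithinAt
    · exact fun s _ => (hg' s).continuousAt.continuousWithinAt
    · exact fun s _ => (hg' s).hasDerivWithinAt
    · exact h0
  have := key ⟨ht, le_refl t⟩
  exact congrArg Prod.fst this
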